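/- Let S be a completely simple semigroup with n ≥ 3 minimal left ideals. Then the automorphism group of In(S) is isomorphic to Sₙ × ℤ₂, and in particular has order 2·n!. -/

import Mathlib

open Set

variable {S : Type*}

/-- A left ideal of a semigroup: a nonempty subset `I` with `S * I ⊆ I`. -/
def IsLeftIdeal [Semigroup S] (I : Set S) : Prop :=
  I.Nonempty ∧ ∀ s : S, ∀ x ∈ I, s * x ∈ I

/-- A nontrivial left ideal is a left ideal different from `S`. -/
def IsNontrivialLeftIdeal [Semigroup S] (I : Set S) : Prop :=
  IsLeftIdeal I ∧ I ≠ Set.univ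

/-- A minimal left ideal: a nontrivial left ideal properly containing no left ideal. -/
def IsMinimalLeftIdeal [Semigroup S] (I : Set S) : Prop :=
  IsNontrivialLeftIdeal I ∧ ∀ J : Set S, IsLeftIdeal J → J ⊆ I → J = I

/-- A maximal left ideal: a nontrivial left ideal properly contained in no
nontrivial left ideal. -/
def IsMaximalLeftIdeal [Semigroup S] (I : Set S) : Prop :=
  IsNontrivialLeftIdeal I ∧ ∀ J : Set S, IsNontrivialLeftIdeal J → I ⊆ J → J = I

/-- Vertices of the inclusion ideal graph: the nontrivial left ideals of `S`. -/
def IdealVert (S : Type*) [Semigroup S] := {I : Set S // IsNontrivialLeftIdeal I}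

/-- The inclusion ideal graph of a semigroup: distinct nontrivial left ideals are
adjacent iff one properly contains the other. -/
def inclusionIdealGraph (S : Type*) [Semigroup S] : SimpleGraph (IdealVert S) :=
  SimpleGraph.fromRel (fun I J => I.1 ⊂ J.1)

/-- A (two-sided) ideal of a semigroup. -/
def IsIdeal [Semigroup S] (I : Set S) : Prop :=
  I.Nonempty ∧ (∀ s : S, ∀ x ∈ I, s * x ∈ I) ∧ (∀ s : S, ∀ x ∈ I, x * s ∈ I)

/-- A completely simple semigroup: simple (no proper two-sided ideal) and containing
a primitive idempotent. -/
def IsCompletelySimple (S : Type*) [Semigroup S] : Prop :=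
  (∀ I : Set S, IsIdeal I → I = Set.univ) ∧
    ∃ e : S, e * e = e ∧ ∀ f : S, f * f = f → f * e = f → e * f = f → f = e

/-- The group structure on graph automorphisms. -/
instance graphAutGroup {V : Type*} (G : SimpleGraph V) : Group (G ≃g G) where
  mul f g := g.trans f
  one := SimpleGraph.Iso.refl
  inv f := f.symm
  mul_assoc f g h := rfl
  one_mul f := rfl
  mul_one f := rfl
  inv_mul_cancel f := by
    ext v
    exact f.toEquiv.symm_apply_apply v

namespace Stmt19Aux

open SimpleGraph

variable {n : ℕ}

abbrev V (n : ℕ) := {A : Set (Fin n) // A.Nonempty ∧ A ≠ Set.univ}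

abbrev G (n : ℕ) : SimpleGraph (V n) := SimpleGraph.fromRel (fun A B => A.1 ⊂ B.1)

lemma adj_iff {v w : V n} : (G n).Adj v w ↔ v.1 ⊂ w.1 ∨ w.1 ⊂ v.1 := by
  rw [SimpleGraph.fromRel_adj]
  constructor
  · rintro ⟨-, h⟩; exact h
  · intro h
    refine ⟨?_, h⟩
    rintro rfl
    rcases h with h | h <;> exact h.ne rfl

def permAut (σ : Equiv.Perm (Fin n)) : (G n) ≃g (G n) where
  toFun v := ⟨σ '' v.1, v.2.1.image σ, by
    intro h
    apply v.2.2
    have := congrArg (Set.image σ.symm) h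
    simpa [Set.image_image] using this⟩
  invFun v := ⟨σ.symm '' v.1, v.2.1.image _, by
    intro h
    apply v.2.2
    have := congrArg (Set.image σ) h
    simpa [Set.image_image] using this⟩
  left_inv v := by ext x; simp
  right_inv v := by ext x; simp
  map_rel_iff' := by
    intro v w
    rw [adj_iff, adj_iff]
    have h : ∀ A B : Set (Fin n), σ '' A ⊂ σ '' B ↔ A ⊂ B := fun A B => by
      rw [Set.ssubset_def, Set.ssubset_def,
        Set.image_subset_image_iff σ.injective, Set.image_subset_image_iff σ.injective]
    exact or_congr (h v.1 w.1) (h w.1 v.1)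

def cAut : (G n) ≃g (G n) where
  toFun v := ⟨v.1ᶜ, Set.nonempty_compl.2 v.2.2, by
    intro h
    exact v.2.1.ne_empty (by simpa [Set.compl_univ_iff] using h)⟩
  invFun v := ⟨v.1ᶜ, Set.nonempty_compl.2 v.2.2, by
    intro h
    exact v.2.1.ne_empty (by simpa [Set.compl_univ_iff] using h)⟩
  left_inv v := by ext x; simp
  right_inv v := by ext x; simp
  map_rel_iff' := by
    intro v w
    rw [adj_iff, adj_iff]
    have key : ∀ A B : Set (Fin n), Aᶜ ⊂ Bᶜ ↔ B ⊂ A := fun A B => compl_lt_compl_iff_lt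
    show (v.1ᶜ ⊂ w.1ᶜ ∨ w.1ᶜ ⊂ v.1ᶜ) ↔ (v.1 ⊂ w.1 ∨ w.1 ⊂ v.1)
    rw [key, key]
    exact or_comm

lemma mul_apply (f g : (G n) ≃g (G n)) (v : V n) : (f * g) v = f (g v) := rfl

lemma aut_ext {f g : (G n) ≃g (G n)} (h : ∀ v, f v = g v) : f = g := RelIso.ext h

@[simp] lemma permAut_apply (σ : Equiv.Perm (Fin n)) (v : V n) :
    (permAut σ v).1 = σ '' v.1 := rfl

@[simp] lemma cAut_apply (v : V n) : ((cAut : (G n) ≃g (G n)) v).1 = v.1ᶜ := rfl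

lemma permAut_mul (σ τ : Equiv.Perm (Fin n)) :
    permAut (σ * τ) = permAut σ * permAut τ := by
  apply aut_ext
  intro v
  apply Subtype.ext
  rw [mul_apply]
  show (σ * τ) '' v.1 = σ '' (τ '' v.1)
  rw [Set.image_image]
  rfl

lemma permAut_one : (permAut 1 : (G n) ≃g (G n)) = 1 := by
  apply aut_ext
  intro v
  apply Subtype.ext
  show (1 : Equiv.Perm (Fin n)) '' v.1 = v.1
  simp

lemma c_mul_c : (cAut : (G n) ≃g (G n)) * cAut = 1 := by
  apply aut_ext
  intro v
  apply Subtype.ext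
  rw [mul_apply]
  show v.1ᶜᶜ = v.1
  simp

lemma c_sq : (cAut : (G n) ≃g (G n)) ^ 2 = 1 := by rw [pow_two, c_mul_c]

lemma c_comm (σ : Equiv.Perm (Fin n)) :
    Commute (cAut : (G n) ≃g (G n)) (permAut σ) := by
  unfold Commute SemiconjBy
  apply aut_ext
  intro v
  apply Subtype.ext
  rw [mul_apply, mul_apply]
  show (σ '' v.1)ᶜ = σ '' v.1ᶜ
  rw [Set.image_compl_eq σ.bijective]


variable (n) in
def Phi : Equiv.Perm (Fin n) × Multiplicative (ZMod 2) →* ((G n) ≃g (G n)) where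
  toFun p := permAut p.1 * cAut ^ (p.2.toAdd.val)
  map_one' := by
    show permAut 1 * cAut ^ ((Multiplicative.toAdd (1 : Multiplicative (ZMod 2))).val) = 1
    rw [permAut_one]
    norm_num
  map_mul' p q := by
    obtain ⟨σ₁, ε₁⟩ := p
    obtain ⟨σ₂, ε₂⟩ := q
    show permAut (σ₁ * σ₂) * cAut ^ ((Multiplicative.toAdd (ε₁ * ε₂)).val) =
      (permAut σ₁ * cAut ^ ((Multiplicative.toAdd ε₁).val)) *
        (permAut σ₂ * cAut ^ ((Multiplicative.toAdd ε₂).val))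
    rw [toAdd_mul, ZMod.val_add, ← pow_eq_pow_mod _ c_sq, pow_add, permAut_mul]
    have h := ((c_comm σ₂).pow_left ((Multiplicative.toAdd ε₁).val)).eq
    conv_rhs => rw [mul_assoc, ← mul_assoc (cAut ^ (Multiplicative.toAdd ε₁).val), h,
      mul_assoc, ← mul_assoc]

variable (hn : 3 ≤ n)

def single (i : Fin n) : V n := ⟨{i}, Set.singleton_nonempty i, by
  intro h
  have h1 : ({i} : Set (Fin n)).ncard = 1 := Set.ncard_singleton i
  rw [h, Set.ncard_univ, Nat.card_eq_fintype_card, Fintype.card_fin] at h1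
  omega⟩

def cosingle (i : Fin n) : V n := ⟨{i}ᶜ, by
  rw [Set.nonempty_compl]
  exact (single hn i).2.2, by
  intro h
  exact (Set.singleton_nonempty i).ne_empty (by simp [Set.compl_univ_iff] at h)⟩

@[simp] lemma single_coe (i : Fin n) : (single hn i).1 = {i} := rfl
@[simp] lemma cosingle_coe (i : Fin n) : (cosingle hn i).1 = {i}ᶜ := rfl

lemma ncard_compl (A : Set (Fin n)) : Aᶜ.ncard = n - A.ncard := by
  have := Set.ncard_add_ncard_compl A
  rw [Nat.card_eq_fintype_card, Fintype.card_fin] at this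
  omega

lemma single_inj {i j : Fin n} (h : single hn i = single hn j) : i = j := by
  have := congrArg (fun v : V n => v.1) h
  simpa [Set.singleton_eq_singleton_iff] using this

lemma cosingle_inj {i j : Fin n} (h : cosingle hn i = cosingle hn j) : i = j := by
  have := congrArg (fun v : V n => v.1ᶜ) h
  simp only [cosingle_coe, compl_compl] at this
  simpa [Set.singleton_eq_singleton_iff] using this

lemma card_subsets (A : Set (Fin n)) :
    Nat.card {B : Set (Fin n) | B ⊆ A} = 2 ^ A.ncard := by
  have e1 : {B : Set (Fin n) | B ⊆ A} ≃ Set ↥A := Equiv.Set.powerset A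
  have e2 : Set ↥A ≃ (↥A → Bool) := Equiv.arrowCongr (Equiv.refl ↥A) Equiv.propEquivBool
  rw [Nat.card_congr e1, Nat.card_congr e2, Nat.card_fun, Nat.card_coe_set_eq]
  norm_num [Nat.card_eq_fintype_card]

lemma card_ssubsets {A : Set (Fin n)} (hA : A.Nonempty) :
    Nat.card {B : Set (Fin n) | B ⊂ A ∧ B.Nonempty} = 2 ^ A.ncard - 2 := by
  have hset : {B : Set (Fin n) | B ⊂ A ∧ B.Nonempty} = {B : Set (Fin n) | B ⊆ A} \ {∅, A} := by
    ext B
    simp only [Set.mem_setOf_eq, Set.mem_diff, Set.mem_insert_iff, Set.mem_singleton_iff]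
    constructor
    · rintro ⟨h1, h2⟩
      refine ⟨h1.subset, ?_⟩
      rintro (rfl | rfl)
      · exact h2.ne_empty rfl
      · exact h1.ne rfl
    · rintro ⟨h1, h2⟩
      push_neg at h2
      exact ⟨h1.ssubset_of_ne h2.2, h2.1⟩
  have hsub : ({∅, A} : Set (Set (Fin n))) ⊆ {B : Set (Fin n) | B ⊆ A} := by
    intro B hB
    simp only [Set.mem_insert_iff, Set.mem_singleton_iff] at hB
    rcases hB with rfl | rfl
    · exact fun x hx => absurd hx (Set.notMem_empty x)
    · exact fun x hx => hx
  rw [Nat.card_coe_set_eq, hset, Set.ncard_diff hsub, Set.ncard_pair hA.ne_empty.symm,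
    ← Nat.card_coe_set_eq, card_subsets]

lemma neighborSet_eq (v : V n) :
    (G n).neighborSet v = {w : V n | w.1 ⊂ v.1} ∪ {w : V n | v.1 ⊂ w.1} := by
  ext w
  rw [SimpleGraph.mem_neighborSet, adj_iff]
  simp only [Set.mem_union, Set.mem_setOf_eq]
  exact or_comm

lemma card_low (v : V n) :
    Nat.card {w : V n | w.1 ⊂ v.1} = 2 ^ v.1.ncard - 2 := by
  have e : {w : V n | w.1 ⊂ v.1} ≃ {B : Set (Fin n) | B ⊂ v.1 ∧ B.Nonempty} :=
    { toFun := fun w => ⟨w.1.1, w.2, w.1.2.1⟩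
      invFun := fun B => ⟨⟨B.1, B.2.2, by
        intro h
        apply v.2.2
        apply univ_subset_iff.1
        intro x _
        have hx : x ∈ (B : Set (Fin n)) := by rw [h]; trivial
        exact B.2.1.subset hx⟩, B.2.1⟩
      left_inv := fun w => rfl
      right_inv := fun B => rfl }
  rw [Nat.card_congr e, card_ssubsets v.2.1]

lemma card_high (v : V n) :
    Nat.card {w : V n | v.1 ⊂ w.1} = 2 ^ (n - v.1.ncard) - 2 := by
  have e : {w : V n | v.1 ⊂ w.1} ≃ {B : Set (Fin n) | B ⊂ v.1ᶜ ∧ B.Nonempty} :=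
    { toFun := fun w => ⟨w.1.1ᶜ, compl_lt_compl_iff_lt.2 w.2, Set.nonempty_compl.2 w.1.2.2⟩
      invFun := fun B => ⟨⟨B.1ᶜ, Set.nonempty_compl.2 (by
          intro h
          have h2 : v.1ᶜ = univ := by
            apply univ_subset_iff.1
            intro x _
            have hx : x ∈ (B : Set (Fin n)) := by rw [h]; trivial
            exact B.2.1.subset hx
          exact v.2.1.ne_empty (by simpa [Set.compl_univ_iff] using h2)), by
          intro h
          exact B.2.2.ne_empty (by simpa [Set.compl_univ_iff] using h)⟩, by
        have h2 : (v.1ᶜ)ᶜ ⊂ B.1ᶜ := compl_lt_compl_iff_lt.2 B.2.1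
        rwa [compl_compl] at h2⟩
      left_inv := fun w => by
        apply Subtype.ext; apply Subtype.ext; exact compl_compl _
      right_inv := fun B => by
        apply Subtype.ext; exact compl_compl _ }
  rw [Nat.card_congr e, card_ssubsets (Set.nonempty_compl.2 v.2.2), ncard_compl]

lemma card_neighborSet (v : V n) :
    Nat.card ((G n).neighborSet v) = (2 ^ v.1.ncard - 2) + (2 ^ (n - v.1.ncard) - 2) := by
  have hdisj : Disjoint {w : V n | w.1 ⊂ v.1} {w : V n | v.1 ⊂ w.1} := by
    rw [Set.disjoint_left]
    intro w h1 h2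
    exact h1.2 h2.1
  rw [Nat.card_coe_set_eq, neighborSet_eq, Set.ncard_union_eq hdisj,
    ← Nat.card_coe_set_eq, ← Nat.card_coe_set_eq, card_low, card_high]

def IsEnd (v : V n) : Prop := (∃ i, v.1 = {i}) ∨ (∃ i, v.1 = {i}ᶜ)

lemma one_le_ncard (v : V n) : 1 ≤ v.1.ncard := (Set.ncard_pos (Set.toFinite _)).2 v.2.1

lemma ncard_lt (v : V n) : v.1.ncard < n := by
  have := Set.ncard_lt_ncard (ssubset_univ_iff.2 v.2.2) (Set.toFinite _)
  rwa [Set.ncard_univ, Nat.card_eq_fintype_card, Fintype.card_fin] at this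

lemma isEnd_iff_ncard (v : V n) : IsEnd v ↔ (v.1.ncard = 1 ∨ v.1.ncard = n - 1) := by
  constructor
  · rintro (⟨i, h⟩ | ⟨i, h⟩)
    · left; rw [h]; exact Set.ncard_singleton i
    · right; rw [h, ncard_compl, Set.ncard_singleton]
  · rintro (h | h)
    · left; exact Set.ncard_eq_one.1 h
    · right
      have hc : v.1ᶜ.ncard = 1 := by
        rw [ncard_compl, h]
        have := ncard_lt v
        omega
      obtain ⟨i, hi⟩ := Set.ncard_eq_one.1 hc
      exact ⟨i, by rw [← compl_compl v.1, hi]⟩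

lemma end_arith {k : ℕ} (hn : 3 ≤ n) (hk1 : 1 ≤ k) (hk2 : k < n) :
    (2 ^ k - 2) + (2 ^ (n - k) - 2) = 2 ^ (n - 1) - 2 ↔ (k = 1 ∨ k = n - 1) := by
  constructor
  · intro h
    by_contra hc
    push_neg at hc
    have e1 : 2 ^ k ≤ 2 ^ (n - 2) := Nat.pow_le_pow_right (by norm_num) (by omega)
    have e2 : 2 ^ (n - k) ≤ 2 ^ (n - 2) := Nat.pow_le_pow_right (by norm_num) (by omega)
    have e3 : 2 ^ (n - 1) = 2 ^ (n - 2) * 2 := by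
      rw [← pow_succ]
      congr 1
      omega
    have e4 : (4 : ℕ) ≤ 2 ^ k := by
      calc (4 : ℕ) = 2 ^ 2 := by norm_num
        _ ≤ 2 ^ k := Nat.pow_le_pow_right (by norm_num) (by omega)
    have e5 : (4 : ℕ) ≤ 2 ^ (n - k) := by
      calc (4 : ℕ) = 2 ^ 2 := by norm_num
        _ ≤ 2 ^ (n - k) := Nat.pow_le_pow_right (by norm_num) (by omega)
    omega
  · rintro (rfl | rfl)
    · norm_num
    · have h1 : n - (n - 1) = 1 := by omega
      rw [h1]
      norm_num

lemma isEnd_iff_card (hn : 3 ≤ n) (v : V n) :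
    IsEnd v ↔ Nat.card ((G n).neighborSet v) = 2 ^ (n - 1) - 2 := by
  rw [isEnd_iff_ncard, card_neighborSet,
    end_arith hn (one_le_ncard v) (ncard_lt v)]

lemma isEnd_map (hn : 3 ≤ n) (φ : (G n) ≃g (G n)) (v : V n) (h : IsEnd v) : IsEnd (φ v) := by
  rw [isEnd_iff_card hn] at h ⊢
  rw [← h]
  exact (Nat.card_congr (φ.mapNeighborSet v)).symm


lemma singleton_ne_compl (hn : 3 ≤ n) (x y : Fin n) : ({x} : Set (Fin n)) ≠ {y}ᶜ := by
  intro he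
  have := congrArg Set.ncard he
  rw [Set.ncard_singleton, ncard_compl, Set.ncard_singleton] at this
  omega

section Classification

lemma not_adj_single (hn : 3 ≤ n) (i j : Fin n) : ¬ (G n).Adj (single hn i) (single hn j) := by
  rw [adj_iff]
  rintro (h | h)
  · exact h.ne (by rw [Set.singleton_subset_singleton.1 h.subset])
  · exact h.ne (by rw [Set.singleton_subset_singleton.1 h.subset])

lemma adj_single_cosingle (hn : 3 ≤ n) (i j : Fin n) :
    (G n).Adj (single hn i) (cosingle hn j) ↔ i ≠ j := by
  rw [adj_iff]
  simp only [single_coe, cosingle_coe]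
  constructor
  · rintro (h | h)
    · rintro rfl
      have hm : i ∈ ({i}ᶜ : Set (Fin n)) := h.subset rfl
      simp at hm
    · exfalso
      have h1 := Set.ncard_le_ncard h.subset (Set.toFinite _)
      rw [ncard_compl, Set.ncard_singleton, Set.ncard_singleton] at h1
      omega
  · intro hij
    left
    have hsub : ({i} : Set (Fin n)) ⊆ {j}ᶜ := by
      simp only [Set.singleton_subset_iff, Set.mem_compl_iff, Set.mem_singleton_iff]
      exact hij
    exact hsub.ssubset_of_ne (singleton_ne_compl hn i j)

lemma not_single_coe (hn : 3 ≤ n) (w : V n) (hw : ¬ ∃ i, w.1 = {i}) :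
    w.1 = {i | (G n).Adj (single hn i) w} := by
  ext i
  simp only [Set.mem_setOf_eq]
  rw [adj_iff]
  simp only [single_coe]
  constructor
  · intro hi
    left
    refine (Set.singleton_subset_iff.2 hi).ssubset_of_ne ?_
    intro he
    exact hw ⟨i, he.symm⟩
  · rintro (h | h)
    · exact h.subset rfl
    · exfalso
      rw [Set.ssubset_singleton_iff] at h
      exact w.2.1.ne_empty h

lemma eq_permAut (hn : 3 ≤ n) (ψ : (G n) ≃g (G n)) (σ : Equiv.Perm (Fin n))
    (h : ∀ i, ψ (single hn i) = single hn (σ i)) : ψ = permAut σ := by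
  apply aut_ext
  intro v
  by_cases hv : ∃ i, v.1 = {i}
  · obtain ⟨i, hi⟩ := hv
    have hv' : v = single hn i := Subtype.ext hi
    rw [hv', h i]
    apply Subtype.ext
    exact (Set.image_singleton).symm
  · have hψv : ¬ ∃ j, (ψ v).1 = {j} := by
      rintro ⟨j, hj⟩
      have h2 : ψ v = single hn j := Subtype.ext hj
      have h3 : ψ (single hn (σ.symm j)) = single hn j := by
        rw [h (σ.symm j), Equiv.apply_symm_apply]
      have h4 : v = single hn (σ.symm j) := ψ.injective (by rw [h2, h3])
      exact hv ⟨σ.symm j, congrArg Subtype.val h4⟩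
    apply Subtype.ext
    rw [not_single_coe hn (ψ v) hψv]
    have h5 : ∀ i, (G n).Adj (single hn i) (ψ v) ↔ (G n).Adj (single hn (σ.symm i)) v := by
      intro i
      conv_lhs => rw [show single hn i = ψ (single hn (σ.symm i)) by
        rw [h (σ.symm i), Equiv.apply_symm_apply]]
      exact ψ.map_adj_iff
    have h6 := not_single_coe hn v hv
    show _ = σ '' v.1
    ext i
    simp only [Set.mem_setOf_eq]
    rw [h5 i]
    constructor
    · intro ha
      have hm : σ.symm i ∈ v.1 := by rw [h6]; exact ha
      exact ⟨σ.symm i, hm, σ.apply_symm_apply i⟩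
    · rintro ⟨x, hx, rfl⟩
      have hm : σ.symm (σ x) ∈ v.1 := by rw [σ.symm_apply_apply]; exact hx
      rw [h6] at hm
      exact hm

lemma Phi_fst (σ : Equiv.Perm (Fin n)) : Phi n (σ, 1) = permAut σ := by
  show permAut σ * cAut ^ ((Multiplicative.toAdd (1 : Multiplicative (ZMod 2))).val) = permAut σ
  norm_num

lemma Phi_snd (σ : Equiv.Perm (Fin n)) :
    Phi n (σ, Multiplicative.ofAdd 1) = permAut σ * cAut := by
  show permAut σ * cAut ^ ((Multiplicative.toAdd (Multiplicative.ofAdd (1 : ZMod 2))).val)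
      = permAut σ * cAut
  norm_num [ZMod.val_one]

lemma phi_inj (hn : 3 ≤ n) : Function.Injective (Phi n) := by
  rw [injective_iff_map_eq_one]
  rintro ⟨σ, ε⟩ h
  have hcases : ∀ x : Multiplicative (ZMod 2), x = 1 ∨ x = Multiplicative.ofAdd 1 := by decide
  rcases hcases ε with rfl | rfl
  · rw [Phi_fst] at h
    have hσ : σ = 1 := by
      apply Equiv.ext
      intro i
      have := congrArg (fun ψ : (G n) ≃g (G n) => (ψ (single hn i)).1) h
      have h2 : ((1 : (G n) ≃g (G n)) (single hn i)).1 = {i} := rfl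
      rw [h2, permAut_apply, single_coe, Set.image_singleton,
        Set.singleton_eq_singleton_iff] at this
      simpa using this
    rw [hσ]
    rfl
  · exfalso
    rw [Phi_snd] at h
    have i0 : Fin n := ⟨0, by omega⟩
    have := congrArg (fun ψ : (G n) ≃g (G n) => (ψ (single hn i0)).1) h
    rw [mul_apply] at this
    have h2 : ((1 : (G n) ≃g (G n)) (single hn i0)).1 = {i0} := rfl
    have h3 : ((permAut σ) (cAut (single hn i0))).1 = σ '' ({i0}ᶜ) := rfl
    rw [h2, h3, Set.image_compl_eq σ.bijective, Set.image_singleton] at this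
    exact singleton_ne_compl hn i0 (σ i0) this.symm

lemma phi_surj (hn : 3 ≤ n) : Function.Surjective (Phi n) := by
  intro φ
  have hend : ∀ i, IsEnd (φ (single hn i)) := fun i => isEnd_map hn φ _ (Or.inl ⟨i, rfl⟩)
  have hdich : (∀ i, ∃ j, (φ (single hn i)).1 = {j}) ∨
      (∀ i, ∃ j, (φ (single hn i)).1 = {j}ᶜ) := by
    by_contra hcon
    push_neg at hcon
    obtain ⟨⟨a, ha⟩, ⟨b, hb⟩⟩ := hcon
    obtain ⟨ya, hya⟩ := (hend a).resolve_left (fun ⟨j, hj⟩ => ha j hj)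
    obtain ⟨xb, hxb⟩ := (hend b).resolve_right (fun ⟨j, hj⟩ => hb j hj)
    have e1 : φ (single hn a) = cosingle hn ya := Subtype.ext hya
    have e2 : φ (single hn b) = single hn xb := Subtype.ext hxb
    have hab : a ≠ b := by
      rintro rfl
      exact singleton_ne_compl hn xb ya (by rw [← hxb, hya])
    have hxy : xb = ya := by
      by_contra hne2
      have hadj : (G n).Adj (single hn xb) (cosingle hn ya) :=
        (adj_single_cosingle hn _ _).2 hne2
      rw [← e1, ← e2, φ.map_adj_iff] at hadj
      exact not_adj_single hn b a hadj
    obtain ⟨c, hc1, hc2⟩ : ∃ c : Fin n, c ≠ a ∧ c ≠ b := by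
      have hne : ({a, b} : Set (Fin n)) ≠ univ := by
        intro he
        have h1 := congrArg Set.ncard he
        rw [Set.ncard_univ, Nat.card_eq_fintype_card, Fintype.card_fin] at h1
        have hle := Set.ncard_insert_le a ({b} : Set (Fin n))
        rw [Set.ncard_singleton] at hle
        omega
      obtain ⟨c, hc⟩ := (Set.ne_univ_iff_exists_notMem _).1 hne
      simp only [Set.mem_insert_iff, Set.mem_singleton_iff] at hc
      push_neg at hc
      exact ⟨c, hc.1, hc.2⟩
    rcases hend c with ⟨z, hz⟩ | ⟨w, hw⟩
    · have e3 : φ (single hn c) = single hn z := Subtype.ext hz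
      have hzya : z = ya := by
        by_contra hne2
        have hadj : (G n).Adj (single hn z) (cosingle hn ya) :=
          (adj_single_cosingle hn _ _).2 hne2
        rw [← e3, ← e1, φ.map_adj_iff] at hadj
        exact not_adj_single hn c a hadj
      have hne3 : single hn z ≠ single hn xb := by
        rw [← e3, ← e2]
        intro he
        exact hc2 (single_inj hn (φ.injective he))
      exact hne3 (by rw [hzya, ← hxy])
    · have e3 : φ (single hn c) = cosingle hn w := Subtype.ext hw
      have hwxb : xb = w := by
        by_contra hne2
        have hadj : (G n).Adj (single hn xb) (cosingle hn w) :=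
          (adj_single_cosingle hn _ _).2 hne2
        rw [← e2, ← e3, φ.map_adj_iff] at hadj
        exact not_adj_single hn b c hadj
      have hne3 : cosingle hn w ≠ cosingle hn ya := by
        rw [← e3, ← e1]
        intro he
        exact hc1 (single_inj hn (φ.injective he))
      exact hne3 (by rw [← hwxb, hxy])
  rcases hdich with hcase | hcase
  · choose g hg using hcase
    have hginj : Function.Injective g := by
      intro i j hij
      have e1 : φ (single hn i) = single hn (g i) := Subtype.ext (hg i)
      have e2 : φ (single hn j) = single hn (g j) := Subtype.ext (hg j)
      apply single_inj hn
      apply φ.injective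
      rw [e1, e2, hij]
    let σ : Equiv.Perm (Fin n) := Equiv.ofBijective g (Finite.injective_iff_bijective.1 hginj)
    have hφ : φ = permAut σ :=
      eq_permAut hn φ σ (fun i => Subtype.ext (hg i))
    exact ⟨(σ, 1), by rw [Phi_fst, hφ]⟩
  · choose g hg using hcase
    set ψ : (G n) ≃g (G n) := cAut * φ with hψ
    have hψs : ∀ i, ψ (single hn i) = single hn (g i) := by
      intro i
      apply Subtype.ext
      rw [hψ, mul_apply]
      show (φ (single hn i)).1ᶜ = {g i}
      rw [hg i, compl_compl]
    have hginj : Function.Injective g := by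
      intro i j hij
      apply single_inj hn
      apply ψ.injective
      rw [hψs i, hψs j, hij]
    let σ : Equiv.Perm (Fin n) := Equiv.ofBijective g (Finite.injective_iff_bijective.1 hginj)
    have hψσ : ψ = permAut σ := eq_permAut hn ψ σ hψs
    refine ⟨(σ, Multiplicative.ofAdd 1), ?_⟩
    rw [Phi_snd, ← (c_comm σ).eq, ← hψσ, hψ, ← mul_assoc, c_mul_c, one_mul]

noncomputable def autEquiv (hn : 3 ≤ n) :
    ((G n) ≃g (G n)) ≃* Equiv.Perm (Fin n) × Multiplicative (ZMod 2) :=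
  (MulEquiv.ofBijective (Phi n) ⟨phi_inj hn, phi_surj hn⟩).symm

end Classification




noncomputable def autCongr {V1 W1 : Type*} {G1 : SimpleGraph V1} {G2 : SimpleGraph W1}
    (e : G1 ≃g G2) : (G1 ≃g G1) ≃* (G2 ≃g G2) where
  toFun f := (e.symm.trans f).trans e
  invFun g := (e.trans g).trans e.symm
  left_inv f := RelIso.ext fun v => by
    show e.symm (e (f (e.symm (e v)))) = f v
    simp
  right_inv g := RelIso.ext fun v => by
    show e (e.symm (g (e (e.symm v)))) = g v
    simp
  map_mul' f g := RelIso.ext fun v => by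
    show e ((f * g) (e.symm v)) = ((e.symm.trans f).trans e * (e.symm.trans g).trans e) v
    show e (f (g (e.symm v))) = e (f (e.symm (e (g (e.symm v)))))
    simp

section SemigroupPart

variable {S : Type*} [Semigroup S]

def sMul (x : S) : Set S := {y | ∃ s, s * x = y}

lemma sMul_leftIdeal (x : S) : IsLeftIdeal (sMul x) := by
  constructor
  · exact ⟨x * x, x, rfl⟩
  · rintro s y ⟨t, rfl⟩
    exact ⟨s * t, mul_assoc s t x⟩

lemma sMul_subset {J : Set S} (hJ : IsLeftIdeal J) {x : S} (hx : x ∈ J) : sMul x ⊆ J := by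
  rintro y ⟨s, rfl⟩
  exact hJ.2 s x hx

lemma sMul_eq {L : Set S} (hL : IsMinimalLeftIdeal L) {x : S} (hx : x ∈ L) : sMul x = L :=
  hL.2 _ (sMul_leftIdeal x) (sMul_subset hL.1.1 hx)

def rMul (L : Set S) (s : S) : Set S := {y | ∃ x ∈ L, x * s = y}

lemma rMul_key {L : Set S} (hL : IsMinimalLeftIdeal L) (s : S) {J : Set S}
    (hJ : IsLeftIdeal J) (hmeet : ∃ y ∈ J, y ∈ rMul L s) : rMul L s ⊆ J := by
  obtain ⟨y, hyJ, x, hxL, hxy⟩ := hmeet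
  set K : Set S := {x ∈ L | x * s ∈ J} with hK
  have hKl : IsLeftIdeal K := by
    constructor
    · exact ⟨x, hxL, by rw [hxy]; exact hyJ⟩
    · rintro t z ⟨hzL, hzJ⟩
      exact ⟨hL.1.1.2 t z hzL, by rw [mul_assoc]; exact hJ.2 t _ hzJ⟩
  have hKL : K = L := hL.2 K hKl (fun z hz => hz.1)
  rintro y' ⟨x', hx', rfl⟩
  have hx'K : x' ∈ K := by rw [hKL]; exact hx'
  exact hx'K.2

lemma rMul_minimal {L : Set S} (hL : IsMinimalLeftIdeal L) (s : S)
    {L0 : Set S} (hL0 : IsNontrivialLeftIdeal L0) : IsMinimalLeftIdeal (rMul L s) := by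
  have hli : IsLeftIdeal (rMul L s) := by
    constructor
    · obtain ⟨x, hx⟩ := hL.1.1.1
      exact ⟨x * s, x, hx, rfl⟩
    · rintro t y ⟨x, hx, rfl⟩
      exact ⟨t * x, hL.1.1.2 t x hx, mul_assoc t x s⟩
  have hnu : rMul L s ≠ Set.univ := by
    intro hu
    have hsub : rMul L s ⊆ L0 := by
      apply rMul_key hL s hL0.1
      obtain ⟨y, hy⟩ := hL0.1.1
      exact ⟨y, hy, by rw [hu]; trivial⟩
    have h2 : Set.univ ⊆ L0 := by rw [← hu]; exact hsub
    exact hL0.2 (univ_subset_iff.1 h2)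
  refine ⟨⟨hli, hnu⟩, ?_⟩
  intro J hJ hJsub
  obtain ⟨y, hy⟩ := hJ.1
  exact subset_antisymm hJsub (rMul_key hL s hJ ⟨y, hy, hJsub hy⟩)

end SemigroupPart

end Stmt19Aux

/-- For a completely simple semigroup with `n ≥ 3` minimal left ideals, the
automorphism group of `In(S)` is `Sₙ × ℤ₂`, of order `2 · n!`. -/
theorem stmt19 [Semigroup S] (hS : IsCompletelySimple S) (n : ℕ) (hn : 3 ≤ n)
    (I : Fin n → Set S) (hinj : Function.Injective I)
    (hmin : ∀ i, IsMinimalLeftIdeal (I i))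
    (hall : ∀ J : Set S, IsMinimalLeftIdeal J → ∃ i, J = I i) :
    Nonempty ((inclusionIdealGraph S ≃g inclusionIdealGraph S) ≃*
        Equiv.Perm (Fin n) × Multiplicative (ZMod 2)) ∧
      Nat.card (inclusionIdealGraph S ≃g inclusionIdealGraph S) = 2 * n.factorial := by
  classical
  have hnt0 : IsNontrivialLeftIdeal (I ⟨0, by omega⟩) := (hmin _).1
  have hUeq : (⋃ i, I i) = Set.univ := by
    apply hS.1
    refine ⟨?_, ?_, ?_⟩
    · obtain ⟨x, hx⟩ := hnt0.1.1
      exact ⟨x, Set.mem_iUnion.2 ⟨_, hx⟩⟩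
    · intro s x hx
      rw [Set.mem_iUnion] at hx ⊢
      obtain ⟨i, hi⟩ := hx
      exact ⟨i, (hmin i).1.1.2 s x hi⟩
    · intro s x hx
      rw [Set.mem_iUnion] at hx ⊢
      obtain ⟨i, hi⟩ := hx
      obtain ⟨j, hj⟩ := hall (Stmt19Aux.rMul (I i) s)
        (Stmt19Aux.rMul_minimal (hmin i) s hnt0)
      exact ⟨j, by rw [← hj]; exact ⟨x, hi, rfl⟩⟩
  have hmem_I : ∀ x : S, ∃ i, x ∈ I i := by
    intro x
    have hx : x ∈ ⋃ i, I i := by rw [hUeq]; trivial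
    exact Set.mem_iUnion.1 hx
  have hIsub : ∀ {J : Set S}, IsLeftIdeal J → ∀ {x : S} {i : Fin n},
      x ∈ J → x ∈ I i → I i ⊆ J := by
    intro J hJ x i hxJ hxi
    have h1 : Stmt19Aux.sMul x = I i := Stmt19Aux.sMul_eq (hmin i) hxi
    rw [← h1]
    exact Stmt19Aux.sMul_subset hJ hxJ
  have hIdisj : ∀ {i j : Fin n} {x : S}, x ∈ I i → x ∈ I j → i = j := by
    intro i j x hi hj
    apply hinj
    rw [← Stmt19Aux.sMul_eq (hmin i) hi, ← Stmt19Aux.sMul_eq (hmin j) hj]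
  have hdecomp : ∀ J : Set S, IsNontrivialLeftIdeal J → J = ⋃ i ∈ {i | I i ⊆ J}, I i := by
    intro J hJ
    apply subset_antisymm
    · intro x hx
      obtain ⟨i, hi⟩ := hmem_I x
      exact Set.mem_biUnion (hIsub hJ.1 hx hi) hi
    · intro x hx
      obtain ⟨i, hi, hxi⟩ := Set.mem_iUnion₂.1 hx
      exact hi hxi
  have hFne : ∀ J : IdealVert S, {i | I i ⊆ J.1}.Nonempty := by
    intro J
    obtain ⟨x, hx⟩ := J.2.1.1
    obtain ⟨i, hi⟩ := hmem_I x
    exact ⟨i, hIsub J.2.1 hx hi⟩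
  have hFprop : ∀ J : IdealVert S, {i | I i ⊆ J.1} ≠ Set.univ := by
    intro J h
    apply J.2.2
    apply univ_subset_iff.1
    intro x _
    obtain ⟨i, hi⟩ := hmem_I x
    have h2 : i ∈ {i | I i ⊆ J.1} := by rw [h]; trivial
    exact h2 hi
  have hBne : ∀ A : Stmt19Aux.V n, (⋃ i ∈ A.1, I i).Nonempty := by
    intro A
    obtain ⟨i, hi⟩ := A.2.1
    obtain ⟨x, hx⟩ := (hmin i).1.1.1
    exact ⟨x, Set.mem_biUnion hi hx⟩
  have hBli : ∀ A : Stmt19Aux.V n, IsLeftIdeal (⋃ i ∈ A.1, I i) := by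
    intro A
    refine ⟨hBne A, ?_⟩
    intro s x hx
    obtain ⟨i, hi, hxi⟩ := Set.mem_iUnion₂.1 hx
    exact Set.mem_biUnion hi ((hmin i).1.1.2 s x hxi)
  have hBnu : ∀ A : Stmt19Aux.V n, (⋃ i ∈ A.1, I i) ≠ Set.univ := by
    intro A h
    obtain ⟨j, hj⟩ := (Set.ne_univ_iff_exists_notMem _).1 A.2.2
    obtain ⟨x, hx⟩ := (hmin j).1.1.1
    have hx2 : x ∈ ⋃ i ∈ A.1, I i := by rw [h]; trivial
    obtain ⟨i, hi, hxi⟩ := Set.mem_iUnion₂.1 hx2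
    exact hj ((hIdisj hxi hx) ▸ hi)
  let e : IdealVert S ≃ Stmt19Aux.V n :=
    { toFun := fun J => ⟨{i | I i ⊆ J.1}, hFne J, hFprop J⟩
      invFun := fun A => ⟨⋃ i ∈ A.1, I i, hBli A, hBnu A⟩
      left_inv := fun J => Subtype.ext (hdecomp J.1 J.2).symm
      right_inv := fun A => Subtype.ext (by
        ext i
        simp only [Set.mem_setOf_eq]
        constructor
        · intro hsub
          obtain ⟨x, hx⟩ := (hmin i).1.1.1
          obtain ⟨i', hi', hxi'⟩ := Set.mem_iUnion₂.1 (hsub hx)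
          exact (hIdisj hxi' hx) ▸ hi'
        · intro hi
          exact Set.subset_biUnion_of_mem hi) }
  have hsubset_iff : ∀ J K : IdealVert S, (e J).1 ⊆ (e K).1 ↔ J.1 ⊆ K.1 := by
    intro J K
    constructor
    · intro h
      rw [hdecomp J.1 J.2, hdecomp K.1 K.2]
      apply Set.iUnion₂_subset
      intro i hi
      exact Set.subset_biUnion_of_mem (h hi)
    · intro h i hi
      exact Set.mem_setOf_eq ▸ (Set.mem_setOf_eq ▸ hi).trans h
  have hss : ∀ J K : IdealVert S, (e J).1 ⊂ (e K).1 ↔ J.1 ⊂ K.1 := by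
    intro J K
    rw [Set.ssubset_def, Set.ssubset_def, hsubset_iff J K, hsubset_iff K J]
  let giso : inclusionIdealGraph S ≃g Stmt19Aux.G n :=
    { toEquiv := e
      map_rel_iff' := by
        intro J K
        show (Stmt19Aux.G n).Adj (e J) (e K) ↔ (inclusionIdealGraph S).Adj J K
        rw [Stmt19Aux.adj_iff, hss J K, hss K J]
        show _ ↔ (SimpleGraph.fromRel fun I J : IdealVert S => I.1 ⊂ J.1).Adj J K
        rw [SimpleGraph.fromRel_adj]
        constructor
        · intro h
          refine ⟨?_, h⟩
          rintro rfl
          rcases h with h | h <;> exact h.ne rfl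
        · rintro ⟨-, h⟩
          exact h }
  have meq : (inclusionIdealGraph S ≃g inclusionIdealGraph S) ≃*
      Equiv.Perm (Fin n) × Multiplicative (ZMod 2) :=
    (Stmt19Aux.autCongr giso).trans (Stmt19Aux.autEquiv hn)
  refine ⟨⟨meq⟩, ?_⟩
  rw [Nat.card_congr meq.toEquiv, Nat.card_prod, Nat.card_eq_fintype_card,
    Fintype.card_perm, Fintype.card_fin]
  have h2 : Nat.card (Multiplicative (ZMod 2)) = 2 := by
    rw [Nat.card_eq_fintype_card]
    rfl
  rw [h2, mul_comm]
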